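/- Let Λ be a finite subset of ℤ^d, L ≥ 1 an integer, and suppose Λ is partitioned into at least two clusters such that any two distinct clusters C, C' satisfy dist(C, C') ≥ 4·max(diam(C), diam(C'), L). Let C₀, C₁ be two clusters minimizing the pairwise distance between distinct clusters, with diam(C₀) ≥ diam(C₁). Then there exists a translate T(C₁) = C₁ + u of C₁ by a vector u ∈ ℤ^d such that: (a) dist(C₀, T(C₁)) ≤ diam(C₀) + diam(C₁) + d (so the separation condition fails for the pair (C₀, T(C₁))); (b) for every cluster C ∉ {C₀, C₁}, dist(C, T(C₁)) ≥ diam(C) + diam(C₁); and (c) for every cluster C ≠ C₁, dist(C, T(C₁)) ≤ 2·dist(C, C₁). -/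
import Mathlib


/-- ℓ¹ norm of a point of `ℤ^d`, as a natural number. -/
def l1norm {d : ℕ} (x : Fin d → ℤ) : ℕ := ∑ i, (x i).natAbs

/-- ℓ¹ diameter of a finite subset of `ℤ^d`. -/
def l1diam {d : ℕ} (C : Finset (Fin d → ℤ)) : ℕ :=
  C.sup fun x => C.sup fun y => l1norm (x - y)

/-- ℓ¹ distance between two subsets of `ℤ^d`. -/
noncomputable def setDist {d : ℕ} (C C' : Finset (Fin d → ℤ)) : ℕ :=
  sInf {k : ℕ | ∃ x ∈ C, ∃ y ∈ C', l1norm (x - y) = k}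

lemma l1norm_add_le {d : ℕ} (x y : Fin d → ℤ) :
    l1norm (x + y) ≤ l1norm x + l1norm y := by
  unfold l1norm
  rw [← Finset.sum_add_distrib]
  exact Finset.sum_le_sum fun i _ => Int.natAbs_add_le _ _

lemma l1norm_neg {d : ℕ} (x : Fin d → ℤ) : l1norm (-x) = l1norm x := by
  unfold l1norm
  exact Finset.sum_congr rfl fun i _ => Int.natAbs_neg _

lemma setDist_le {d : ℕ} {C C' : Finset (Fin d → ℤ)} {x y : Fin d → ℤ}
    (hx : x ∈ C) (hy : y ∈ C') : setDist C C' ≤ l1norm (x - y) :=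
  Nat.sInf_le ⟨x, hx, y, hy, rfl⟩

lemma setDist_exists {d : ℕ} {C C' : Finset (Fin d → ℤ)}
    (hC : C.Nonempty) (hC' : C'.Nonempty) :
    ∃ x ∈ C, ∃ y ∈ C', l1norm (x - y) = setDist C C' := by
  obtain ⟨x, hx⟩ := hC
  obtain ⟨y, hy⟩ := hC'
  have hnonempty : {k : ℕ | ∃ x ∈ C, ∃ y ∈ C', l1norm (x - y) = k}.Nonempty :=
    ⟨l1norm (x - y), x, hx, y, hy, rfl⟩
  exact Nat.sInf_mem hnonempty

lemma le_setDist {d : ℕ} {C C' : Finset (Fin d → ℤ)} {n : ℕ}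
    (hC : C.Nonempty) (hC' : C'.Nonempty)
    (h : ∀ x ∈ C, ∀ y ∈ C', n ≤ l1norm (x - y)) : n ≤ setDist C C' := by
  obtain ⟨x, hx⟩ := hC
  obtain ⟨y, hy⟩ := hC'
  refine le_csInf ⟨l1norm (x - y), x, hx, y, hy, rfl⟩ ?_
  rintro k ⟨a, ha, b, hb, rfl⟩
  exact h a ha b hb

lemma l1norm_le_l1diam {d : ℕ} {C : Finset (Fin d → ℤ)} {x y : Fin d → ℤ}
    (hx : x ∈ C) (hy : y ∈ C) : l1norm (x - y) ≤ l1diam C := by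
  have h1 : l1norm (x - y) ≤ C.sup fun z => l1norm (x - z) :=
    Finset.le_sup (f := fun z => l1norm (x - z)) hy
  exact h1.trans (Finset.le_sup (f := fun a => C.sup fun z => l1norm (a - z)) hx)

/-- Moving one cluster: if `Λ ⊆ ℤ^d` is partitioned into at least two clusters
satisfying the separation condition, and `C₀, C₁` are two distinct clusters of
minimal mutual distance with `diam C₀ ≥ diam C₁`, then there is a translate
`C₁ + u` of `C₁` such that (a) `dist(C₀, C₁+u) ≤ diam C₀ + diam C₁ + d`,
(b) every other cluster `C` satisfies `dist(C, C₁+u) ≥ diam C + diam C₁`, and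
(c) every cluster `C ≠ C₁` satisfies `dist(C, C₁+u) ≤ 2 dist(C, C₁)`. -/
theorem stmt6 (d L : ℕ) (hL : 1 ≤ L) (Λ : Finset (Fin d → ℤ))
    (P : Finset (Finset (Fin d → ℤ)))
    (hne : ∀ C ∈ P, C.Nonempty)
    (hdisj : ∀ C ∈ P, ∀ C' ∈ P, C ≠ C' → Disjoint C C')
    (hunion : P.biUnion id = Λ)
    (hcardP : 2 ≤ P.card)
    (hsep : ∀ C ∈ P, ∀ C' ∈ P, C ≠ C' →
      4 * max (max (l1diam C) (l1diam C')) L ≤ setDist C C')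
    (C₀ C₁ : Finset (Fin d → ℤ)) (hC₀ : C₀ ∈ P) (hC₁ : C₁ ∈ P) (hne01 : C₀ ≠ C₁)
    (hmin : ∀ C ∈ P, ∀ C' ∈ P, C ≠ C' → setDist C₀ C₁ ≤ setDist C C')
    (hdiam : l1diam C₁ ≤ l1diam C₀) :
    ∃ u : Fin d → ℤ,
      setDist C₀ (C₁.image (· + u)) ≤ l1diam C₀ + l1diam C₁ + d ∧
      (∀ C ∈ P, C ≠ C₀ → C ≠ C₁ →
        l1diam C + l1diam C₁ ≤ setDist C (C₁.image (· + u))) ∧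
      (∀ C ∈ P, C ≠ C₁ →
        setDist C (C₁.image (· + u)) ≤ 2 * setDist C C₁) := by
  obtain ⟨x₀, hx₀, x₁, hx₁, hD⟩ := setDist_exists (hne C₀ hC₀) (hne C₁ hC₁)
  refine ⟨x₀ - x₁, ?_, ?_, ?_⟩
  · -- (a)
    have hmem : x₀ ∈ C₁.image (· + (x₀ - x₁)) :=
      Finset.mem_image.2 ⟨x₁, hx₁, by simp⟩
    have h0 : setDist C₀ (C₁.image (· + (x₀ - x₁))) ≤ l1norm (x₀ - x₀) :=
      setDist_le hx₀ hmem
    have : l1norm (x₀ - x₀) = 0 := by simp [l1norm]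
    omega
  · -- (b)
    intro C hC hC0 hC1
    refine le_setDist (hne C hC) ((hne C₁ hC₁).image _) ?_
    intro y hy w hw
    obtain ⟨z, hz, rfl⟩ := Finset.mem_image.1 hw
    have h1 : setDist C C₀ ≤ l1norm (y - x₀) := setDist_le hy hx₀
    have h2 : l1norm (y - x₀) ≤ l1norm (y - (z + (x₀ - x₁))) + l1norm (z - x₁) := by
      have heq : y - x₀ = (y - (z + (x₀ - x₁))) + (z - x₁) := by ring
      rw [heq]
      exact l1norm_add_le _ _
    have h3 : l1norm (z - x₁) ≤ l1diam C₁ := l1norm_le_l1diam hz hx₁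
    have h4 : 4 * max (max (l1diam C) (l1diam C₀)) L ≤ setDist C C₀ :=
      hsep C hC C₀ hC₀ hC0
    have hm1 : l1diam C ≤ max (max (l1diam C) (l1diam C₀)) L :=
      le_trans (le_max_left _ _) (le_max_left _ _)
    have hm2 : l1diam C₀ ≤ max (max (l1diam C) (l1diam C₀)) L :=
      le_trans (le_max_right _ _) (le_max_left _ _)
    omega
  · -- (c)
    intro C hC hC1
    obtain ⟨y, hy, z, hz, hyz⟩ := setDist_exists (hne C hC) (hne C₁ hC₁)
    have hmem : z + (x₀ - x₁) ∈ C₁.image (· + (x₀ - x₁)) :=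
      Finset.mem_image.2 ⟨z, hz, rfl⟩
    have h1 : setDist C (C₁.image (· + (x₀ - x₁))) ≤ l1norm (y - (z + (x₀ - x₁))) :=
      setDist_le hy hmem
    have h2 : l1norm (y - (z + (x₀ - x₁))) ≤ l1norm (y - z) + l1norm (x₀ - x₁) := by
      have heq : y - (z + (x₀ - x₁)) = (y - z) + -(x₀ - x₁) := by ring
      calc l1norm (y - (z + (x₀ - x₁))) = l1norm ((y - z) + -(x₀ - x₁)) := by rw [heq]
        _ ≤ l1norm (y - z) + l1norm (-(x₀ - x₁)) := l1norm_add_le _ _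
        _ = l1norm (y - z) + l1norm (x₀ - x₁) := by rw [l1norm_neg]
    have h3 : setDist C₀ C₁ ≤ setDist C C₁ := hmin C hC C₁ hC₁ hC1
    omega
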